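/- Let R : [0,T] → ℝ be a nonnegative C¹ function, κ, L₁ : [0,T] → ℝ continuous with κ(s) > 0 and L₁(s) ≥ 0, and β, γ⁻ > 0 constants. Suppose that for all s ∈ [0,T], dR/ds ≤ β L₁(s) √(2 R(s)) − (2κ(s)γ⁻/β) R(s). Then for all s ∈ [0,T]: √(R(s)) ≤ e^{−(γ⁻/β)∫₀ˢ κ(u)du} √(R(0)) + (β/√2) ∫₀ˢ L₁(u) e^{−(γ⁻/β)∫ᵤˢ κ(u')du'} du. -/

import Mathlib

open Set

set_option maxHeartbeats 1000000 in
theorem stmt5 (T β γm : ℝ) (hT : 0 < T) (hβ : 0 < β) (hγ : 0 < γm)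
    (R R' κ L₁ : ℝ → ℝ)
    (hRderiv : ∀ s ∈ Icc (0:ℝ) T, HasDerivAt R (R' s) s)
    (hR'cont : ContinuousOn R' (Icc 0 T))
    (hRnn : ∀ s ∈ Icc (0:ℝ) T, 0 ≤ R s)
    (hκcont : ContinuousOn κ (Icc 0 T)) (hκpos : ∀ s ∈ Icc (0:ℝ) T, 0 < κ s)
    (hLcont : ContinuousOn L₁ (Icc 0 T)) (hLnn : ∀ s ∈ Icc (0:ℝ) T, 0 ≤ L₁ s)
    (hineq : ∀ s ∈ Icc (0:ℝ) T,
      R' s ≤ β * L₁ s * Real.sqrt (2 * R s) - (2 * κ s * γm / β) * R s) :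
    ∀ s ∈ Icc (0:ℝ) T,
      Real.sqrt (R s) ≤
        Real.exp (-(γm / β) * ∫ u in (0:ℝ)..s, κ u) * Real.sqrt (R 0)
          + (β / Real.sqrt 2) *
            ∫ u in (0:ℝ)..s, L₁ u * Real.exp (-(γm / β) * ∫ u' in u..s, κ u') := by
  intro s hs
  obtain ⟨hs0, hsT⟩ := hs
  -- the projection onto [0,T]
  set p : ℝ → ℝ := fun t => max 0 (min t T) with hp
  have hpmem : ∀ t, p t ∈ Icc (0:ℝ) T :=
    fun t => ⟨le_max_left _ _, max_le hT.le (min_le_right _ _)⟩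
  have hpid : ∀ t ∈ Icc (0:ℝ) T, p t = t := by
    intro t ht
    simp only [hp, min_eq_left ht.2, max_eq_right ht.1]
  have hpcont : Continuous p := continuous_const.max (continuous_id.min continuous_const)
  -- extended coefficient functions
  set κe : ℝ → ℝ := fun t => κ (p t) with hκedef
  set Le : ℝ → ℝ := fun t => L₁ (p t) with hLedef
  have hκeq : ∀ t ∈ Icc (0:ℝ) T, κe t = κ t := fun t ht => by
    simp only [hκedef, hpid t ht]
  have hLeq : ∀ t ∈ Icc (0:ℝ) T, Le t = L₁ t := fun t ht => by
    simp only [hLedef, hpid t ht]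
  have hκecont : Continuous κe := hκcont.comp_continuous hpcont hpmem
  have hLecont : Continuous Le := hLcont.comp_continuous hpcont hpmem
  have hκenn : ∀ t, 0 ≤ κe t := fun t => (hκpos _ (hpmem t)).le
  have hLenn : ∀ t, 0 ≤ Le t := fun t => hLnn _ (hpmem t)
  set c : ℝ := γm / β with hc
  have hcpos : 0 < c := div_pos hγ hβ
  -- the antiderivative of κe
  set K : ℝ → ℝ := fun t => ∫ u in (0:ℝ)..t, κe u with hKdef
  have hKderiv : ∀ t, HasDerivAt K (κe t) t :=
    fun t => (hκecont.integral_hasStrictDerivAt 0 t).hasDerivAt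
  have hKdiff : Differentiable ℝ K := fun t => (hKderiv t).differentiableAt
  have hKcont : Continuous K := hKdiff.continuous
  have hK0 : K 0 = 0 := intervalIntegral.integral_same
  have hKs : (∫ u in (0:ℝ)..s, κ u) = K s := by
    refine intervalIntegral.integral_congr fun x hx => ?_
    rw [uIcc_of_le hs0] at hx
    exact (hκeq x ⟨hx.1, hx.2.trans hsT⟩).symm
  have hKsub : ∀ u ∈ Icc (0:ℝ) s, K s - K u = ∫ x in u..s, κ x := by
    intro u hu
    have h1 : K s - K u = ∫ x in u..s, κe x :=
      intervalIntegral.integral_interval_sub_left (hκecont.intervalIntegrable 0 s)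
        (hκecont.intervalIntegrable 0 u)
    rw [h1]
    refine intervalIntegral.integral_congr fun x hx => ?_
    rw [uIcc_of_le hu.2] at hx
    exact hκeq x ⟨hu.1.trans hx.1, hx.2.trans hsT⟩
  -- abbreviations for the final bound
  set E₀ : ℝ := Real.exp (-(c * K s)) with hE₀
  set B : ℝ → ℝ := fun u => c * κe u * Real.exp (c * K u) with hBdef
  have hBcont : Continuous B := by
    exact (continuous_const.mul hκecont).mul (Real.continuous_exp.comp (continuous_const.mul hKcont))
  set C₀ : ℝ := E₀ * ∫ u in (0:ℝ)..s, B u with hC₀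
  set I₀ : ℝ := ∫ u in (0:ℝ)..s, L₁ u * Real.exp (-(γm / β) * ∫ u' in u..s, κ u') with hI₀
  have hE₀pos : 0 < E₀ := Real.exp_pos _
  have hC₀nn : 0 ≤ C₀ := by
    refine mul_nonneg hE₀pos.le (intervalIntegral.integral_nonneg hs0 fun u _ => ?_)
    exact mul_nonneg (mul_nonneg hcpos.le (hκenn u)) (Real.exp_pos _).le
  -- key estimate with regularization parameter ε
  have key : ∀ ε : ℝ, 0 < ε →
      Real.sqrt (R s) ≤ E₀ * Real.sqrt (R 0) + (β / Real.sqrt 2) * I₀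
        + Real.sqrt ε * (E₀ + C₀) := by
    intro ε hε
    set g : ℝ → ℝ :=
      fun u => (β * Le u / Real.sqrt 2 + c * Real.sqrt ε * κe u) * Real.exp (c * K u) with hgdef
    have hgcont : Continuous g := by
      refine (((continuous_const.mul hLecont).div_const _).add
        (continuous_const.mul hκecont)).mul ?_
      exact Real.continuous_exp.comp (continuous_const.mul hKcont)
    set G : ℝ → ℝ := fun t => ∫ u in (0:ℝ)..t, g u with hGdef
    have hGderiv : ∀ t, HasDerivAt G (g t) t :=
      fun t => (hgcont.integral_hasStrictDerivAt 0 t).hasDerivAt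
    set F : ℝ → ℝ := fun t => Real.exp (c * K t) * Real.sqrt (R t + ε) - G t with hFdef
    have hφpos : ∀ t ∈ Icc (0:ℝ) T, 0 < Real.sqrt (R t + ε) := by
      intro t ht
      have := hRnn t ht
      exact Real.sqrt_pos.mpr (by linarith)
    have hFderiv : ∀ t ∈ Icc (0:ℝ) T, HasDerivAt F
        (Real.exp (c * K t) * (c * κe t) * Real.sqrt (R t + ε)
          + Real.exp (c * K t) * (R' t / (2 * Real.sqrt (R t + ε))) - g t) t := by
      intro t ht
      have h1 : HasDerivAt (fun t => c * K t) (c * κe t) t := (hKderiv t).const_mul c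
      have h2 := h1.exp
      have h3 : HasDerivAt (fun t => R t + ε) (R' t) t := (hRderiv t ht).add_const ε
      have hne : R t + ε ≠ 0 := by
        have := hRnn t ht; positivity
      have h4 := h3.sqrt hne
      exact (h2.mul h4).sub (hGderiv t)
    -- the derivative is nonpositive on [0,T]
    have hFd_nonpos : ∀ t ∈ Icc (0:ℝ) T,
        Real.exp (c * K t) * (c * κe t) * Real.sqrt (R t + ε)
          + Real.exp (c * K t) * (R' t / (2 * Real.sqrt (R t + ε))) - g t ≤ 0 := by
      intro t ht
      set φ : ℝ := Real.sqrt (R t + ε) with hφdef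
      have hφ : 0 < φ := hφpos t ht
      have hRt := hRnn t ht
      have hφsq : φ ^ 2 = R t + ε := Real.sq_sqrt (by linarith)
      have hφε : Real.sqrt ε ≤ φ := Real.sqrt_le_sqrt (by linarith)
      have hεsq : Real.sqrt ε ^ 2 = ε := Real.sq_sqrt hε.le
      have h2 : Real.sqrt 2 * Real.sqrt 2 = 2 := Real.mul_self_sqrt (by norm_num)
      have h2pos : (0:ℝ) < Real.sqrt 2 := Real.sqrt_pos.mpr (by norm_num)
      have hsq2 : Real.sqrt (2 * R t) ≤ Real.sqrt 2 * φ := by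
        rw [Real.sqrt_mul (by norm_num : (0:ℝ) ≤ 2)]
        exact mul_le_mul_of_nonneg_left (Real.sqrt_le_sqrt (by linarith)) (Real.sqrt_nonneg 2)
      have h1 : β * L₁ t * Real.sqrt (2 * R t) ≤ β * L₁ t * (Real.sqrt 2 * φ) :=
        mul_le_mul_of_nonneg_left hsq2 (mul_nonneg hβ.le (hLnn t ht))
      have hi := hineq t ht
      have hco : 2 * κ t * γm / β * R t = 2 * c * κ t * R t := by rw [hc]; ring
      rw [hco] at hi
      have h3 : 2 * c * κ t * ε ≤ 2 * c * κ t * (Real.sqrt ε * φ) := by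
        refine mul_le_mul_of_nonneg_left ?_
          (mul_nonneg (mul_nonneg (by norm_num) hcpos.le) (hκpos t ht).le)
        nlinarith [Real.sqrt_nonneg ε]
      have hb : c * κ t * φ + R' t / (2 * φ) ≤ β * L₁ t / Real.sqrt 2 + c * Real.sqrt ε * κ t := by
        have hstep : R' t / (2 * φ) ≤
            β * L₁ t / Real.sqrt 2 + c * Real.sqrt ε * κ t - c * κ t * φ := by
          rw [div_le_iff₀ (by positivity)]
          have hexp : (β * L₁ t / Real.sqrt 2 + c * Real.sqrt ε * κ t - c * κ t * φ) * (2 * φ)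
              = β * L₁ t * (Real.sqrt 2 * φ) + 2 * c * κ t * (Real.sqrt ε * φ)
                - 2 * c * κ t * φ ^ 2 := by
            field_simp
            linear_combination (-(β * L₁ t)) * h2
          rw [hexp]
          have hRt' : R t = φ ^ 2 - ε := by linarith
          rw [hRt'] at hi h1
          linarith [hi, h1, h3]
        linarith
      have hκt := hκeq t ht
      have hLt := hLeq t ht
      have hfact : Real.exp (c * K t) * (c * κe t) * φ
            + Real.exp (c * K t) * (R' t / (2 * φ)) - g t
          = Real.exp (c * K t) * ((c * κ t * φ + R' t / (2 * φ))
              - (β * L₁ t / Real.sqrt 2 + c * Real.sqrt ε * κ t)) := by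
        simp only [hgdef, hκt, hLt]
        ring
      rw [hfact]
      have : (c * κ t * φ + R' t / (2 * φ))
          - (β * L₁ t / Real.sqrt 2 + c * Real.sqrt ε * κ t) ≤ 0 := by linarith
      exact mul_nonpos_of_nonneg_of_nonpos (Real.exp_pos _).le this
    -- F is antitone on [0,T]
    have hFanti : AntitoneOn F (Icc 0 T) := by
      refine antitoneOn_of_deriv_nonpos (convex_Icc 0 T)
        (fun t ht => (hFderiv t ht).continuousAt.continuousWithinAt) ?_ ?_
      · intro t ht
        rw [interior_Icc] at ht
        exact ((hFderiv t ⟨ht.1.le, ht.2.le⟩).differentiableAt).differentiableWithinAt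
      · intro t ht
        rw [interior_Icc] at ht
        have ht' : t ∈ Icc (0:ℝ) T := ⟨ht.1.le, ht.2.le⟩
        rw [(hFderiv t ht').deriv]
        exact hFd_nonpos t ht'
    have hFs : F s ≤ F 0 := hFanti (left_mem_Icc.mpr hT.le) ⟨hs0, hsT⟩ hs0
    have hF0 : F 0 = Real.sqrt (R 0 + ε) := by
      simp [hFdef, hGdef, hK0]
    have hmain : Real.sqrt (R s + ε) ≤ E₀ * (Real.sqrt (R 0 + ε) + G s) := by
      have h1 : Real.exp (c * K s) * Real.sqrt (R s + ε) ≤ Real.sqrt (R 0 + ε) + G s := by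
        have := hFs
        rw [hF0] at this
        simp only [hFdef] at this
        linarith
      rw [hE₀, Real.exp_neg]
      rw [inv_mul_eq_div, le_div_iff₀ (Real.exp_pos _)]
      calc Real.sqrt (R s + ε) * Real.exp (c * K s)
          = Real.exp (c * K s) * Real.sqrt (R s + ε) := by ring
        _ ≤ Real.sqrt (R 0 + ε) + G s := h1
    -- identify E₀ * G s
    have hGs : E₀ * G s = (β / Real.sqrt 2) * I₀ + Real.sqrt ε * C₀ := by
      have hptwise : ∀ u ∈ Icc (0:ℝ) s,
          E₀ * g u = (β / Real.sqrt 2) *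
              (L₁ u * Real.exp (-(γm / β) * ∫ u' in u..s, κ u'))
            + Real.sqrt ε * (E₀ * B u) := by
        intro u hu
        have huT : u ∈ Icc (0:ℝ) T := ⟨hu.1, hu.2.trans hsT⟩
        have hKu := hKsub u hu
        have hexp : E₀ * Real.exp (c * K u)
            = Real.exp (-(γm / β) * ∫ u' in u..s, κ u') := by
          rw [hE₀, ← Real.exp_add, ← hKu, hc]
          ring_nf
        simp only [hgdef, hBdef, hLeq u huT, hκeq u huT]
        calc E₀ * ((β * L₁ u / Real.sqrt 2 + c * Real.sqrt ε * κ u) * Real.exp (c * K u))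
              = (β / Real.sqrt 2) * (L₁ u * (E₀ * Real.exp (c * K u)))
                + Real.sqrt ε * (E₀ * (c * κ u * Real.exp (c * K u))) := by ring
          _ = _ := by rw [hexp]
        -- orient: goal is E₀ * g u = ..., handle with mul_comm
      have hGint : E₀ * G s = ∫ u in (0:ℝ)..s, E₀ * g u := by
        rw [hGdef]
        exact (intervalIntegral.integral_const_mul E₀ g).symm
      rw [hGint]
      rw [intervalIntegral.integral_congr (g := fun u =>
          (β / Real.sqrt 2) * (L₁ u * Real.exp (-(γm / β) * ∫ u' in u..s, κ u'))
            + Real.sqrt ε * (E₀ * B u)) ?_]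
      · have hint1 : IntervalIntegrable
            (fun u => (β / Real.sqrt 2) *
              (L₁ u * Real.exp (-(γm / β) * ∫ u' in u..s, κ u'))) MeasureTheory.volume 0 s := by
          have : ∀ u ∈ Icc (0:ℝ) s,
              (β / Real.sqrt 2) * (L₁ u * Real.exp (-(γm / β) * ∫ u' in u..s, κ u'))
              = (β / Real.sqrt 2) * (Le u * Real.exp (c * (K u - K s))) := by
            intro u hu
            have huT : u ∈ Icc (0:ℝ) T := ⟨hu.1, hu.2.trans hsT⟩
            rw [hLeq u huT, ← hKsub u hu, hc]
            ring_nf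
          refine (ContinuousOn.intervalIntegrable ?_)
          rw [uIcc_of_le hs0]
          refine ContinuousOn.congr ?_ this
          refine Continuous.continuousOn ?_
          exact continuous_const.mul (hLecont.mul (Real.continuous_exp.comp
            (continuous_const.mul (hKcont.sub continuous_const))))
        have hint2 : IntervalIntegrable
            (fun u => Real.sqrt ε * (E₀ * B u)) MeasureTheory.volume 0 s :=
          ((continuous_const.mul (continuous_const.mul hBcont)).intervalIntegrable 0 s)
        rw [intervalIntegral.integral_add hint1 hint2,
          intervalIntegral.integral_const_mul, intervalIntegral.integral_const_mul,
          intervalIntegral.integral_const_mul]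
      · intro u hu
        rw [uIcc_of_le hs0] at hu
        exact hptwise u hu
    -- conclude
    have h0 : Real.sqrt (R s) ≤ Real.sqrt (R s + ε) :=
      Real.sqrt_le_sqrt (by linarith)
    have hadd : Real.sqrt (R 0 + ε) ≤ Real.sqrt (R 0) + Real.sqrt ε := by
      have hR0 := hRnn 0 ⟨le_refl 0, hT.le⟩
      rw [← Real.sqrt_sq (by positivity : (0:ℝ) ≤ Real.sqrt (R 0) + Real.sqrt ε)]
      refine Real.sqrt_le_sqrt ?_
      nlinarith [Real.sq_sqrt hR0, Real.sq_sqrt hε.le, Real.sqrt_nonneg (R 0),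
        Real.sqrt_nonneg ε]
    calc Real.sqrt (R s) ≤ Real.sqrt (R s + ε) := h0
      _ ≤ E₀ * (Real.sqrt (R 0 + ε) + G s) := hmain
      _ = E₀ * Real.sqrt (R 0 + ε) + E₀ * G s := by ring
      _ ≤ E₀ * (Real.sqrt (R 0) + Real.sqrt ε) + ((β / Real.sqrt 2) * I₀ + Real.sqrt ε * C₀) := by
          rw [hGs]
          exact add_le_add (mul_le_mul_of_nonneg_left hadd hE₀pos.le) le_rfl
      _ = E₀ * Real.sqrt (R 0) + (β / Real.sqrt 2) * I₀ + Real.sqrt ε * (E₀ + C₀) := by ring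
  -- take ε → 0
  have hgoal : Real.sqrt (R s) ≤ E₀ * Real.sqrt (R 0) + (β / Real.sqrt 2) * I₀ := by
    set D : ℝ := E₀ + C₀ with hD
    have hDnn : 0 ≤ D := by positivity
    clear_value I₀ C₀ E₀ D
    refine le_of_forall_pos_le_add fun δ hδ => ?_
    have hεpos : 0 < (δ / (D + 1)) ^ 2 := by positivity
    have hkey := key ((δ / (D + 1)) ^ 2) hεpos
    have hsqrt : Real.sqrt ((δ / (D + 1)) ^ 2) = δ / (D + 1) :=
      Real.sqrt_sq (by positivity)
    rw [hsqrt] at hkey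
    have hlast : δ / (D + 1) * D ≤ δ := by
      rw [div_mul_eq_mul_div, div_le_iff₀ (by linarith)]
      nlinarith [hδ, hDnn]
    linarith
  rw [hKs]
  have he : Real.exp (-(γm / β) * K s) = E₀ := by rw [hE₀, hc]; congr 1; ring
  rw [he]
  exact hgoal
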